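/- With the notation of the single-step second-order solvers, let h = λ_{t_i} − λ_{t_{i−1}} > 0, r ∈ (0,1], and suppose u is given by the data-prediction intermediate step u = (σ_{s}/σ_{t_{i−1}}) x − α_{s}(e^{−rh} − 1) X(x), where X(x) = (x − σ_{t_{i−1}} E(x))/α_{t_{i−1}} and λ_s = λ_{t_{i−1}} + rh. Then u = (α_s/α_{t_{i−1}}) x − σ_s (e^{rh} − 1) E(x). Furthermore, e^{λ_{t_{i−1}}} (X(u, s) − X(x, t_{i−1})) = e^{−rh} (E(x, t_{i−1}) − E(u, s)), where X(·,·) = (· − σ_· E(·,·))/α_· denotes the data prediction at the respective time. -/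

import Mathlib

/-- The intermediate data-prediction step of DPM-Solver++(2S) rewritten with the noise
prediction model: `u = (α_s/α_{i−1}) x − σ_s (e^{rh} − 1) E₁(x)`, and the damping identity
`e^{λ_{i−1}} (X_s(u) − X₁(x)) = e^{−rh} (E₁(x) − E_s(u))`. -/
theorem stmt9 {D : ℕ} (α1 σ1 αs σs : ℝ)
    (hα1 : 0 < α1) (hσ1 : 0 < σ1) (hαs : 0 < αs) (hσs : 0 < σs)
    (h r : ℝ) (hh : 0 < h) (hr0 : 0 < r) (hr1 : r ≤ 1)
    (hls : Real.log (αs/σs) = Real.log (α1/σ1) + r * h)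
    (E1 Es : EuclideanSpace ℝ (Fin D) → EuclideanSpace ℝ (Fin D))
    (X1 Xs : EuclideanSpace ℝ (Fin D) → EuclideanSpace ℝ (Fin D))
    (hX1 : ∀ v, X1 v = (1/α1) • (v - σ1 • E1 v))
    (hXs : ∀ v, Xs v = (1/αs) • (v - σs • Es v))
    (x u : EuclideanSpace ℝ (Fin D))
    (hu : u = (σs/σ1) • x - (αs * (Real.exp (-(r*h)) - 1)) • X1 x) :
    u = (αs/α1) • x - (σs * (Real.exp (r*h) - 1)) • E1 x ∧
    Real.exp (Real.log (α1/σ1)) • (Xs u - X1 x) =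
      Real.exp (-(r*h)) • (E1 x - Es u) := by
  have hexp : αs / σs = (α1 / σ1) * Real.exp (r * h) := by
    have h2 := congrArg Real.exp hls
    rw [Real.exp_add, Real.exp_log (by positivity), Real.exp_log (by positivity)] at h2
    exact h2
  have key : αs * σ1 = α1 * σs * Real.exp (r * h) := by
    field_simp at hexp
    linarith [hexp]
  have hinv : Real.exp (-(r * h)) * Real.exp (r * h) = 1 := by
    rw [← Real.exp_add]; simp
  have key2 : αs * σ1 * Real.exp (-(r * h)) = α1 * σs := by
    linear_combination Real.exp (-(r * h)) * key + α1 * σs * hinv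
  have hlog : Real.exp (Real.log (α1 / σ1)) = α1 / σ1 := Real.exp_log (by positivity)
  have h1 : u = (αs/α1) • x - (σs * (Real.exp (r*h) - 1)) • E1 x := by
    rw [hu, hX1]
    match_scalars
    · field_simp
      linear_combination -key2
    · field_simp
      linear_combination key2 - key
  refine ⟨h1, ?_⟩
  rw [hXs, hX1, h1, hlog]
  match_scalars
  · field_simp
    ring
  · field_simp
    linear_combination key - key2
  · field_simp
    linear_combination key2
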